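/- Let P be the graphic matroid on the edge set of K₄ and let Q be the partition matroid on E(K₄) whose three parts are the three perfect matchings of K₄ (a set is independent in Q if it contains at most one edge from each perfect matching). Then β(P) = 2, β(Q) = 2, and β(P ∩ Q) = 3. -/

import Mathlib

open Finset

/-- The edge set of `K₄`. -/
noncomputable def E4 : Finset (Sym2 (Fin 4)) := (⊤ : SimpleGraph (Fin 4)).edgeSet.toFinset

/-- Independence in the graphic matroid of `K₄`: acyclic sets of edges. -/
def graphicIndep (e : Finset (Sym2 (Fin 4))) : Prop :=
  ↑e ⊆ (⊤ : SimpleGraph (Fin 4)).edgeSet ∧ (SimpleGraph.fromEdgeSet (e : Set (Sym2 (Fin 4)))).IsAcyclic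

/-- The three perfect matchings of `K₄`. -/
def PM : Fin 3 → Finset (Sym2 (Fin 4))
  | 0 => {s(0, 1), s(2, 3)}
  | 1 => {s(0, 2), s(1, 3)}
  | 2 => {s(0, 3), s(1, 2)}

/-- Independence in the partition matroid whose parts are the perfect matchings of `K₄`. -/
def pmIndep (e : Finset (Sym2 (Fin 4))) : Prop :=
  ↑e ⊆ (⊤ : SimpleGraph (Fin 4)).edgeSet ∧ ∀ i : Fin 3, (e ∩ PM i).card ≤ 1

/-- The covering number of a complex on the ground set `E(K₄)`. -/
noncomputable def betaK4 (Indep : Finset (Sym2 (Fin 4)) → Prop) : ℕ :=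
  sInf {k : ℕ | ∃ F : Finset (Finset (Sym2 (Fin 4))), (∀ m ∈ F, Indep m) ∧
    (∀ x ∈ E4, ∃ m ∈ F, x ∈ m) ∧ F.card = k}

/-! ### Auxiliary machinery -/

def E4' : Finset (Sym2 (Fin 4)) := {s(0,1), s(0,2), s(0,3), s(1,2), s(1,3), s(2,3)}

lemma E4_eq : E4 = E4' := by
  ext x
  simp only [E4, Set.mem_toFinset, SimpleGraph.edgeSet_top, Set.mem_setOf_eq]
  revert x; decide

lemma mem_edgeSetTop_iff (x : Sym2 (Fin 4)) :
    x ∈ (⊤ : SimpleGraph (Fin 4)).edgeSet ↔ x ∈ E4' := by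
  rw [SimpleGraph.edgeSet_top, Set.mem_compl_iff, Sym2.mem_diagSet]
  revert x; decide

instance instFromEdgeSetAdj (s : Set (Sym2 (Fin 4))) [DecidablePred (· ∈ s)] :
    DecidableRel (SimpleGraph.fromEdgeSet s).Adj := fun _ _ =>
  decidable_of_iff' _ (SimpleGraph.fromEdgeSet_adj s)

instance instSdiffAdj (G H : SimpleGraph (Fin 4)) [DecidableRel G.Adj] [DecidableRel H.Adj] :
    DecidableRel (G \ H).Adj := fun a b => decidable_of_iff' _ (G.sdiff_adj H a b)

/-- Decidable criterion for acyclicity of the graph spanned by a finite edge set. -/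
def acyclicCheck (e : Finset (Sym2 (Fin 4))) : Prop :=
  ∀ v w : Fin 4, (SimpleGraph.fromEdgeSet (↑e : Set (Sym2 (Fin 4)))).Adj v w →
    ¬(SimpleGraph.fromEdgeSet (↑e : Set (Sym2 (Fin 4))) \
        SimpleGraph.fromEdgeSet {s(v, w)}).Reachable v w

instance : DecidablePred acyclicCheck := fun e => by
  unfold acyclicCheck; infer_instance

lemma acyclicCheck_iff (e : Finset (Sym2 (Fin 4))) :
    (SimpleGraph.fromEdgeSet (↑e : Set (Sym2 (Fin 4)))).IsAcyclic ↔ acyclicCheck e := by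
  rw [SimpleGraph.isAcyclic_iff_forall_adj_isBridge]
  constructor
  · intro h v w hvw
    exact (SimpleGraph.isBridge_iff).mp (h hvw)
  · intro h v w hvw
    exact (SimpleGraph.isBridge_iff).mpr (h v w hvw)

lemma isAcyclic_anti {V : Type*} {G H : SimpleGraph V} (hle : H ≤ G) (hG : G.IsAcyclic) :
    H.IsAcyclic := fun _ c hc => hG (c.mapLe hle) (hc.mapLe hle)

/-- `m` contains none of the four triangles of `K₄`. -/
def triFree (m : Finset (Sym2 (Fin 4))) : Prop :=
  ¬({s(0,1), s(1,2), s(0,2)} : Finset (Sym2 (Fin 4))) ⊆ m ∧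
  ¬({s(0,1), s(1,3), s(0,3)} : Finset (Sym2 (Fin 4))) ⊆ m ∧
  ¬({s(0,2), s(2,3), s(0,3)} : Finset (Sym2 (Fin 4))) ⊆ m ∧
  ¬({s(1,2), s(2,3), s(1,3)} : Finset (Sym2 (Fin 4))) ⊆ m

instance : DecidablePred triFree := fun m => by unfold triFree; infer_instance

lemma triFree_of_acyclic {m : Finset (Sym2 (Fin 4))}
    (h : (SimpleGraph.fromEdgeSet (↑m : Set (Sym2 (Fin 4)))).IsAcyclic) : triFree m := by
  have key : ∀ t : Finset (Sym2 (Fin 4)), ¬acyclicCheck t → ¬ t ⊆ m := by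
    intro t ht hsub
    have hle : SimpleGraph.fromEdgeSet (↑t : Set (Sym2 (Fin 4))) ≤
        SimpleGraph.fromEdgeSet (↑m : Set (Sym2 (Fin 4))) :=
      SimpleGraph.fromEdgeSet_mono (by exact_mod_cast hsub)
    exact ht ((acyclicCheck_iff t).mp (isAcyclic_anti hle h))
  exact ⟨key _ (by decide), key _ (by decide), key _ (by decide), key _ (by decide)⟩

set_option maxRecDepth 4000 in
lemma key_decide : ∀ x0 ∈ PM 0, ∀ x1 ∈ PM 1, ∀ x2 ∈ PM 2,
    ¬(triFree {x0, x1, x2} ∧ triFree (E4' \ {x0, x1, x2})) := by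
  decide

lemma memPM : ∀ x ∈ E4', x ∈ PM 0 ∨ x ∈ PM 1 ∨ x ∈ PM 2 := by decide

lemma subset_inter_union {m : Finset (Sym2 (Fin 4))} (hm : m ⊆ E4') :
    m ⊆ (m ∩ PM 0) ∪ (m ∩ PM 1) ∪ (m ∩ PM 2) := by
  intro x hx
  have hx' := memPM x (hm hx)
  simp only [Finset.mem_union, Finset.mem_inter]
  tauto

lemma card_le_three {m : Finset (Sym2 (Fin 4))} (hm : m ⊆ E4')
    (h : ∀ i : Fin 3, (m ∩ PM i).card ≤ 1) : m.card ≤ 3 := by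
  calc m.card ≤ ((m ∩ PM 0) ∪ (m ∩ PM 1) ∪ (m ∩ PM 2)).card :=
        Finset.card_le_card (subset_inter_union hm)
    _ ≤ ((m ∩ PM 0) ∪ (m ∩ PM 1)).card + (m ∩ PM 2).card := Finset.card_union_le _ _
    _ ≤ (m ∩ PM 0).card + (m ∩ PM 1).card + (m ∩ PM 2).card := by
        have := Finset.card_union_le (m ∩ PM 0) (m ∩ PM 1); omega
    _ ≤ 3 := by have := h 0; have := h 1; have := h 2; omega

theorem stmt12 :
    betaK4 graphicIndep = 2 ∧ betaK4 pmIndep = 2 ∧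
      betaK4 (fun e => graphicIndep e ∧ pmIndep e) = 3 := by
  have hsubE : ∀ m : Finset (Sym2 (Fin 4)), m ⊆ E4' →
      (↑m : Set (Sym2 (Fin 4))) ⊆ (⊤ : SimpleGraph (Fin 4)).edgeSet := by
    intro m hm x hx
    rw [mem_edgeSetTop_iff]
    exact hm hx
  refine ⟨?_, ?_, ?_⟩
  · -- graphic
    have hmem : 2 ∈ {k : ℕ | ∃ F : Finset (Finset (Sym2 (Fin 4))), (∀ m ∈ F, graphicIndep m) ∧
        (∀ x ∈ E4, ∃ m ∈ F, x ∈ m) ∧ F.card = k} := by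
      refine ⟨{({s(0,1), s(1,2), s(2,3)} : Finset (Sym2 (Fin 4))),
               ({s(0,2), s(0,3), s(1,3)} : Finset (Sym2 (Fin 4)))}, ?_, ?_, by decide⟩
      · intro m hm
        rw [Finset.mem_insert, Finset.mem_singleton] at hm
        rcases hm with rfl | rfl
        · exact ⟨hsubE _ (by decide), (acyclicCheck_iff _).mpr (by decide)⟩
        · exact ⟨hsubE _ (by decide), (acyclicCheck_iff _).mpr (by decide)⟩
      · rw [E4_eq]; decide
    refine le_antisymm (Nat.sInf_le hmem) (le_csInf ⟨2, hmem⟩ ?_)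
    rintro k ⟨F, hind, hcov, rfl⟩
    by_contra hlt
    push_neg at hlt
    interval_cases h : F.card
    · obtain ⟨m, hm, -⟩ := hcov s(0,1) (by rw [E4_eq]; decide)
      simp [Finset.card_eq_zero.mp h] at hm
    · obtain ⟨m, hmF⟩ := Finset.card_eq_one.mp h
      subst hmF
      have hall : ∀ x ∈ E4', x ∈ m := by
        intro x hx
        obtain ⟨m', hm', hxm⟩ := hcov x (by rw [E4_eq]; exact hx)
        rw [Finset.mem_singleton] at hm'
        subst hm'; exact hxm
      have htf := triFree_of_acyclic (hind m (Finset.mem_singleton_self m)).2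
      have hsub01 : ∀ y ∈ ({s(0,1), s(1,2), s(0,2)} : Finset (Sym2 (Fin 4))), y ∈ E4' := by decide
      exact htf.1 fun x hx => hall x (hsub01 x hx)
  · -- partition
    have hmem : 2 ∈ {k : ℕ | ∃ F : Finset (Finset (Sym2 (Fin 4))), (∀ m ∈ F, pmIndep m) ∧
        (∀ x ∈ E4, ∃ m ∈ F, x ∈ m) ∧ F.card = k} := by
      refine ⟨{({s(0,1), s(0,2), s(0,3)} : Finset (Sym2 (Fin 4))),
               ({s(1,2), s(1,3), s(2,3)} : Finset (Sym2 (Fin 4)))}, ?_, ?_, by decide⟩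
      · intro m hm
        rw [Finset.mem_insert, Finset.mem_singleton] at hm
        rcases hm with rfl | rfl
        · exact ⟨hsubE _ (by decide), by decide⟩
        · exact ⟨hsubE _ (by decide), by decide⟩
      · rw [E4_eq]; decide
    refine le_antisymm (Nat.sInf_le hmem) (le_csInf ⟨2, hmem⟩ ?_)
    rintro k ⟨F, hind, hcov, rfl⟩
    by_contra hlt
    push_neg at hlt
    interval_cases h : F.card
    · obtain ⟨m, hm, -⟩ := hcov s(0,1) (by rw [E4_eq]; decide)
      simp [Finset.card_eq_zero.mp h] at hm
    · obtain ⟨m, hmF⟩ := Finset.card_eq_one.mp h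
      subst hmF
      have hall : ∀ x ∈ E4', x ∈ m := by
        intro x hx
        obtain ⟨m', hm', hxm⟩ := hcov x (by rw [E4_eq]; exact hx)
        rw [Finset.mem_singleton] at hm'
        subst hm'; exact hxm
      have h2 : ({s(0,1), s(2,3)} : Finset (Sym2 (Fin 4))) ⊆ m ∩ PM 0 := by
        have ha1 : s(0,1) ∈ m ∩ PM 0 := Finset.mem_inter.mpr ⟨hall _ (by decide), by decide⟩
        have ha2 : s(2,3) ∈ m ∩ PM 0 := Finset.mem_inter.mpr ⟨hall _ (by decide), by decide⟩
        intro x hx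
        rw [Finset.mem_insert, Finset.mem_singleton] at hx
        rcases hx with rfl | rfl <;> assumption
      have := Finset.card_le_card h2
      have hc : ({s(0,1), s(2,3)} : Finset (Sym2 (Fin 4))).card = 2 := by decide
      have := (hind m (Finset.mem_singleton_self m)).2 0
      omega
  · -- intersection
    have hmem : 3 ∈ {k : ℕ | ∃ F : Finset (Finset (Sym2 (Fin 4))),
        (∀ m ∈ F, graphicIndep m ∧ pmIndep m) ∧ (∀ x ∈ E4, ∃ m ∈ F, x ∈ m) ∧ F.card = k} := by
      refine ⟨{({s(0,1), s(0,2)} : Finset (Sym2 (Fin 4))),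
               ({s(0,3), s(1,3)} : Finset (Sym2 (Fin 4))),
               ({s(1,2), s(2,3)} : Finset (Sym2 (Fin 4)))}, ?_, ?_, by decide⟩
      · intro m hm
        simp only [Finset.mem_insert, Finset.mem_singleton] at hm
        rcases hm with rfl | rfl | rfl
        · exact ⟨⟨hsubE _ (by decide), (acyclicCheck_iff _).mpr (by decide)⟩,
                 hsubE _ (by decide), by decide⟩
        · exact ⟨⟨hsubE _ (by decide), (acyclicCheck_iff _).mpr (by decide)⟩,
                 hsubE _ (by decide), by decide⟩
        · exact ⟨⟨hsubE _ (by decide), (acyclicCheck_iff _).mpr (by decide)⟩,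
                 hsubE _ (by decide), by decide⟩
      · rw [E4_eq]; decide
    refine le_antisymm (Nat.sInf_le hmem) (le_csInf ⟨3, hmem⟩ ?_)
    rintro k ⟨F, hind, hcov, rfl⟩
    by_contra hlt
    push_neg at hlt
    have hFsub : ∀ m ∈ F, m ⊆ E4' := by
      intro m hm x hx
      have := (hind m hm).2.1 hx
      rwa [mem_edgeSetTop_iff] at this
    have hFcard : ∀ m ∈ F, m.card ≤ 3 := fun m hm =>
      card_le_three (hFsub m hm) ((hind m hm).2.2)
    have hcovsub : E4' ⊆ F.biUnion id := by
      intro x hx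
      obtain ⟨m, hm, hxm⟩ := hcov x (by rw [E4_eq]; exact hx)
      exact Finset.mem_biUnion.mpr ⟨m, hm, hxm⟩
    have h6 : (6 : ℕ) ≤ ∑ m ∈ F, m.card := by
      calc (6 : ℕ) = E4'.card := by decide
        _ ≤ (F.biUnion id).card := Finset.card_le_card hcovsub
        _ ≤ ∑ m ∈ F, (id m).card := Finset.card_biUnion_le
        _ = ∑ m ∈ F, m.card := rfl
    have hsum3 : ∑ m ∈ F, m.card ≤ 3 * F.card := by
      calc ∑ m ∈ F, m.card ≤ ∑ _m ∈ F, 3 := Finset.sum_le_sum hFcard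
        _ = 3 * F.card := by rw [Finset.sum_const, smul_eq_mul, mul_comm]
    have hk2 : F.card = 2 := by omega
    obtain ⟨a, b, hab, hFab⟩ := Finset.card_eq_two.mp hk2
    subst hFab
    have haF : a ∈ ({a, b} : Finset (Finset (Sym2 (Fin 4)))) := by simp
    have hbF : b ∈ ({a, b} : Finset (Finset (Sym2 (Fin 4)))) := by simp
    have hsum : a.card + b.card = ∑ m ∈ ({a, b} : Finset (Finset (Sym2 (Fin 4)))), m.card := by
      rw [Finset.sum_insert (by simpa using hab), Finset.sum_singleton]
    have hcards : a.card = 3 ∧ b.card = 3 := by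
      have := hFcard a haF; have := hFcard b hbF; omega
    -- a ∪ b = E4' and they are disjoint
    have hub : a ∪ b ⊆ E4' := Finset.union_subset (hFsub a haF) (hFsub b hbF)
    have hcovab : E4' ⊆ a ∪ b := by
      intro x hx
      have := hcovsub hx
      simp only [Finset.mem_biUnion, Finset.mem_insert, Finset.mem_singleton, id] at this
      obtain ⟨m, hm | hm, hxm⟩ := this <;> subst hm
      · exact Finset.mem_union_left _ hxm
      · exact Finset.mem_union_right _ hxm
    have hunion : a ∪ b = E4' := Finset.Subset.antisymm hub hcovab
    have hcardu : (a ∪ b).card = 6 := by rw [hunion]; decide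
    have hinter : (a ∩ b).card = 0 := by
      have := Finset.card_union_add_card_inter a b
      omega
    have hbdisj : b ⊆ E4' \ a := by
      intro x hx
      rw [Finset.mem_sdiff]
      refine ⟨hFsub b hbF hx, fun hxa => ?_⟩
      have : x ∈ a ∩ b := Finset.mem_inter.mpr ⟨hxa, hx⟩
      rw [Finset.card_eq_zero.mp hinter] at this
      exact absurd this (Finset.notMem_empty x)
    have hbeq : b = E4' \ a := by
      apply Finset.eq_of_subset_of_card_le hbdisj
      rw [Finset.card_sdiff_of_subset (hFsub a haF)]
      have : E4'.card = 6 := by decide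
      omega
    -- a has exactly one edge from each perfect matching
    have hone : ∀ i : Fin 3, (a ∩ PM i).card = 1 := by
      have hsub' := subset_inter_union (hFsub a haF)
      have h3 := Finset.card_le_card hsub'
      have hca := hcards.1
      have hle01 := Finset.card_union_le (a ∩ PM 0) (a ∩ PM 1)
      have hle012 := Finset.card_union_le ((a ∩ PM 0) ∪ (a ∩ PM 1)) (a ∩ PM 2)
      have hpm := (hind a haF).2.2
      have h0 := hpm 0; have h1 := hpm 1; have h2 := hpm 2
      have h0' : (a ∩ PM 0).card = 1 := by omega
      have h1' : (a ∩ PM 1).card = 1 := by omega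
      have h2' : (a ∩ PM 2).card = 1 := by omega
      intro i
      fin_cases i
      · exact h0'
      · exact h1'
      · exact h2'
    obtain ⟨x0, hx0⟩ := Finset.card_eq_one.mp (hone 0)
    obtain ⟨x1, hx1⟩ := Finset.card_eq_one.mp (hone 1)
    obtain ⟨x2, hx2⟩ := Finset.card_eq_one.mp (hone 2)
    have hx0m : x0 ∈ a ∩ PM 0 := hx0 ▸ Finset.mem_singleton_self x0
    have hx1m : x1 ∈ a ∩ PM 1 := hx1 ▸ Finset.mem_singleton_self x1
    have hx2m : x2 ∈ a ∩ PM 2 := hx2 ▸ Finset.mem_singleton_self x2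
    have haeq : a = {x0, x1, x2} := by
      apply Finset.Subset.antisymm
      · intro x hx
        rcases memPM x (hFsub a haF hx) with h | h | h
        · have : x ∈ a ∩ PM 0 := Finset.mem_inter.mpr ⟨hx, h⟩
          rw [hx0, Finset.mem_singleton] at this
          simp [this]
        · have : x ∈ a ∩ PM 1 := Finset.mem_inter.mpr ⟨hx, h⟩
          rw [hx1, Finset.mem_singleton] at this
          simp [this]
        · have : x ∈ a ∩ PM 2 := Finset.mem_inter.mpr ⟨hx, h⟩
          rw [hx2, Finset.mem_singleton] at this
          simp [this]
      · intro x hx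
        simp only [Finset.mem_insert, Finset.mem_singleton] at hx
        rcases hx with rfl | rfl | rfl
        · exact (Finset.mem_inter.mp hx0m).1
        · exact (Finset.mem_inter.mp hx1m).1
        · exact (Finset.mem_inter.mp hx2m).1
    refine key_decide x0 (Finset.mem_inter.mp hx0m).2 x1 (Finset.mem_inter.mp hx1m).2
      x2 (Finset.mem_inter.mp hx2m).2 ⟨?_, ?_⟩
    · rw [← haeq]
      exact triFree_of_acyclic (hind a haF).1.2
    · rw [← haeq, ← hbeq]
      exact triFree_of_acyclic (hind b hbF).1.2
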